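/- The polytope Q̄ = Conv{(0,0,0),(5,0,0),(0,5,0),(0,0,2),(1,0,2),(0,1,2)} ⊂ ℝ³ (anticanonical polytope of the Fano class (4)) has exactly one interior lattice point and is a normal lattice polytope. -/

import Mathlib

open scoped Pointwise

def IsLatticePt {d : ℕ} (x : Fin d → ℝ) : Prop := ∀ i, ∃ z : ℤ, x i = (z : ℝ)

def IsLatticePolytope {d : ℕ} (P : Set (Fin d → ℝ)) : Prop :=
  ∃ V : Finset (Fin d → ℝ), V.Nonempty ∧ (∀ v ∈ V, IsLatticePt v) ∧ P = convexHull ℝ ↑V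

def IsNormalPolytope {d : ℕ} (P : Set (Fin d → ℝ)) : Prop :=
  ∀ n : ℕ, 1 ≤ n → ∀ x ∈ (n : ℝ) • P, IsLatticePt x →
    ∃ f : Fin n → (Fin d → ℝ), (∀ i, f i ∈ P ∧ IsLatticePt (f i)) ∧ x = ∑ i, f i

def P1 : Set (Fin 3 → ℝ) := convexHull ℝ {![0,0,0], ![1,0,0], ![0,1,0], ![0,0,1]}

def dot2 (x y : Fin 2 → ℝ) : ℝ := ∑ i, x i * y i

def normalCone (P : Set (Fin 2 → ℝ)) (u : Fin 2 → ℝ) : Set (Fin 2 → ℝ) :=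
  {y | ∀ x ∈ P, dot2 x y ≤ dot2 u y}

/-- The normal fan of `A` refines the normal fan of `B`: every normal cone of `A`
is contained in some normal cone of `B`. -/
def FanRefines (A B : Set (Fin 2 → ℝ)) : Prop :=
  ∀ u ∈ A, ∃ v ∈ B, normalCone A u ⊆ normalCone B v

/-- At every vertex the primitive edge directions form a ℤ-basis of ℤ². -/
def IsSmoothPolygon (F : Set (Fin 2 → ℝ)) : Prop :=
  ∀ u ∈ Set.extremePoints ℝ F, ∃ m₁ m₂ : Fin 2 → ℤ,
    (m₁ 0 * m₂ 1 - m₁ 1 * m₂ 0 = 1 ∨ m₁ 0 * m₂ 1 - m₁ 1 * m₂ 0 = -1) ∧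
    {y : Fin 2 → ℝ | ∃ t : ℝ, ∃ x ∈ F, 0 ≤ t ∧ y = t • (x - u)} =
      {y : Fin 2 → ℝ | ∃ a b : ℝ, 0 ≤ a ∧ 0 ≤ b ∧
        y = a • (fun i => (m₁ i : ℝ)) + b • (fun i => (m₂ i : ℝ))}

def emb (v : Fin 2 → ℝ) (t : ℝ) : Fin 3 → ℝ := ![v 0, v 1, t]

def cayley (F G : Set (Fin 2 → ℝ)) : Set (Fin 3 → ℝ) :=
  convexHull ℝ ((fun v => emb v 0) '' F ∪ (fun v => emb v 1) '' G)

/-! ### Auxiliary material for `stmt15` -/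

@[simp]
lemma cons_val_five' {α : Type*} {m : ℕ} (x : α) (u : Fin (m+5) → α) :
    Matrix.vecCons x u 5 =
      Matrix.vecHead (Matrix.vecTail (Matrix.vecTail (Matrix.vecTail (Matrix.vecTail u)))) :=
  rfl

/-- Integer points of the `n`-th dilate of `Q̄`. -/
def inQZ (n : ℕ) (a b c : ℤ) : Prop :=
  0 ≤ a ∧ 0 ≤ b ∧ 0 ≤ c ∧ c ≤ 2*n ∧ a + b + 2*c ≤ 5*n

lemma stepZ (n : ℕ) (a b c : ℤ) (h : inQZ (n+1) a b c) :
    ∃ a' b' c' : ℤ, inQZ 1 a' b' c' ∧ inQZ n (a-a') (b-b') (c-c') := by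
  obtain ⟨h0, h1, h2, h3, h4⟩ := h
  refine ⟨min a (max 0 (a + b + 2*c - 2*(min c 2) - 5*n)),
    max 0 (a + b + 2*c - 2*(min c 2) - 5*n) - min a (max 0 (a + b + 2*c - 2*(min c 2) - 5*n)),
    min c 2, ⟨?_,?_,?_,?_,?_⟩, ⟨?_,?_,?_,?_,?_⟩⟩ <;>
  · simp only [Nat.cast_add, Nat.cast_one] at h3 h4 ⊢
    omega

lemma decZ : ∀ (n : ℕ) (a b c : ℤ), inQZ (n+1) a b c →
    ∃ f : Fin (n+1) → (Fin 3 → ℤ), (∀ i, inQZ 1 (f i 0) (f i 1) (f i 2)) ∧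
      a = ∑ i, f i 0 ∧ b = ∑ i, f i 1 ∧ c = ∑ i, f i 2 := by
  intro n
  induction n with
  | zero =>
    intro a b c h
    exact ⟨fun _ => ![a,b,c], fun i => by simpa using h, by simp, by simp, by simp⟩
  | succ m ih =>
    intro a b c h
    obtain ⟨a', b', c', h1, h2⟩ := stepZ (m+1) a b c h
    obtain ⟨g, hg, ha, hb, hc⟩ := ih (a-a') (b-b') (c-c') h2
    refine ⟨Fin.cons ![a',b',c'] g, ?_, ?_, ?_, ?_⟩
    · intro i
      refine Fin.cases ?_ ?_ i
      · simpa using h1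
      · intro j; simpa using hg j
    all_goals simp [Fin.sum_univ_succ] at ha hb hc ⊢; omega

/-- The H-description of `Q̄`. -/
def Hset : Set (Fin 3 → ℝ) :=
  {p | 0 ≤ p 0 ∧ 0 ≤ p 1 ∧ 0 ≤ p 2 ∧ p 2 ≤ 2 ∧ p 0 + p 1 + 2 * p 2 ≤ 5}

/-- The strict-inequality region of `Q̄`. -/
def Oset : Set (Fin 3 → ℝ) :=
  {p | 0 < p 0 ∧ 0 < p 1 ∧ 0 < p 2 ∧ p 2 < 2 ∧ p 0 + p 1 + 2 * p 2 < 5}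

def Sv : Set (Fin 3 → ℝ) := {![0,0,0], ![5,0,0], ![0,5,0], ![0,0,2], ![1,0,2], ![0,1,2]}

lemma convex_H : Convex ℝ Hset := by
  intro x hx y hy a b ha hb hab
  obtain ⟨hx0,hx1,hx2,hx3,hx4⟩ := hx
  obtain ⟨hy0,hy1,hy2,hy3,hy4⟩ := hy
  refine ⟨?_, ?_, ?_, ?_, ?_⟩ <;>
    simp only [Pi.add_apply, Pi.smul_apply, smul_eq_mul] <;> nlinarith

lemma hull_sub_H : convexHull ℝ Sv ⊆ Hset := by
  apply convexHull_min ?_ convex_H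
  intro p hp
  simp only [Sv, Set.mem_insert_iff, Set.mem_singleton_iff] at hp
  rcases hp with rfl|rfl|rfl|rfl|rfl|rfl <;> constructor <;> norm_num [Matrix.cons_val_two, Matrix.tail_cons, Matrix.head_cons]

lemma H_sub_hull : Hset ⊆ convexHull ℝ Sv := by
  intro p hp
  obtain ⟨h0, h1, h2, h3, h4⟩ := hp
  set x := p 0 with hx
  set y := p 1 with hy
  set z := p 2 with hz
  set u := max 0 (x + y + 5/2*z - 5) with hu
  set l4 := min x u with hl4
  have hu0 : 0 ≤ u := le_max_left _ _
  have huL : x + y + 5/2*z - 5 ≤ u := le_max_right _ _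
  have huz : u ≤ z/2 := by
    rcases max_cases 0 (x + y + 5/2*z - 5) with ⟨h,_⟩|⟨h,_⟩ <;> rw [hu, h] <;> linarith
  have huxy : u ≤ x + y := by
    rcases max_cases 0 (x + y + 5/2*z - 5) with ⟨h,_⟩|⟨h,_⟩ <;> rw [hu, h] <;> linarith
  have hl40 : 0 ≤ l4 := le_min h0 hu0
  have hl4x : l4 ≤ x := min_le_left _ _
  have hl4u : l4 ≤ u := min_le_right _ _
  have hl5y : u - l4 ≤ y := by
    rcases min_cases x u with ⟨h,_⟩|⟨h,_⟩ <;> rw [hl4, h] <;> linarith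
  set w : Fin 6 → ℝ :=
    ![1 - (x - l4)/5 - (y - (u - l4))/5 - (z/2 - u) - l4 - (u - l4),
      (x - l4)/5, (y - (u - l4))/5, z/2 - u, l4, u - l4] with hw
  set v : Fin 6 → (Fin 3 → ℝ) :=
    ![![0,0,0], ![5,0,0], ![0,5,0], ![0,0,2], ![1,0,2], ![0,1,2]] with hv
  have hwn : ∀ i ∈ (Finset.univ : Finset (Fin 6)), 0 ≤ w i := by
    intro i _
    fin_cases i <;> simp only [hw, Matrix.cons_val_zero, Matrix.cons_val_one, Matrix.head_cons,
      Matrix.cons_val_two, Matrix.tail_cons, Matrix.cons_val_three, Matrix.cons_val_four,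
      Fin.mk_one, Matrix.cons_val_fin_one] <;> first
      | linarith
      | (show (0:ℝ) ≤ _; norm_num; linarith)
  have hws : ∑ i, w i = 1 := by
    simp only [Fin.sum_univ_six, hw, Matrix.cons_val_zero, Matrix.cons_val_one, Matrix.head_cons,
      Matrix.cons_val_two, Matrix.tail_cons, Matrix.cons_val_three, Matrix.cons_val_four,
      cons_val_five', Matrix.cons_val_fin_one, Fin.mk_one]
    ring
  have hvm : ∀ i ∈ (Finset.univ : Finset (Fin 6)), v i ∈ convexHull ℝ Sv := by
    intro i _
    apply subset_convexHull
    fin_cases i <;> simp [Sv, hv]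
  have hmem := (convex_convexHull ℝ Sv).sum_mem hwn hws hvm
  have hpe : p = ∑ i, w i • v i := by
    funext j
    fin_cases j <;>
      simp only [Fin.sum_univ_six, hw, hv, Matrix.cons_val_zero, Matrix.cons_val_one,
        Matrix.head_cons, Matrix.cons_val_two, Matrix.tail_cons, Matrix.cons_val_three,
        Matrix.cons_val_four, cons_val_five', Matrix.cons_val_fin_one, Fin.mk_one,
        Fin.zero_eta, Fin.reduceFinMk, Pi.add_apply, Pi.smul_apply, smul_eq_mul, Fin.isValue] <;>
      · (try rw [← hx]); (try rw [← hy]); (try rw [← hz]); ring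
  rw [hpe]; exact hmem

lemma QeqH : convexHull ℝ Sv = Hset := le_antisymm hull_sub_H H_sub_hull

lemma O_open : IsOpen Oset := by
  have h0 : Continuous fun p : Fin 3 → ℝ => p 0 := continuous_apply 0
  have h1 : Continuous fun p : Fin 3 → ℝ => p 1 := continuous_apply 1
  have h2 : Continuous fun p : Fin 3 → ℝ => p 2 := continuous_apply 2
  have hs : Continuous fun p : Fin 3 → ℝ => p 0 + p 1 + 2 * p 2 :=
    (h0.add h1).add (continuous_const.mul h2)
  unfold Oset
  simp only [Set.setOf_and]
  exact ((isOpen_lt continuous_const h0).inter ((isOpen_lt continuous_const h1).inter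
    ((isOpen_lt continuous_const h2).inter ((isOpen_lt h2 continuous_const).inter
    (isOpen_lt hs continuous_const)))))

lemma O_sub_H : Oset ⊆ Hset := by
  intro p ⟨a,b,c,d,e⟩
  exact ⟨a.le, b.le, c.le, d.le, e.le⟩

lemma perturb {p : Fin 3 → ℝ} (hp : p ∈ interior Hset) (i : Fin 3) :
    ∃ δ : ℝ, 0 < δ ∧ Function.update p i (p i + δ) ∈ Hset ∧
      Function.update p i (p i - δ) ∈ Hset := by
  obtain ⟨ε, hε, hball⟩ := Metric.mem_nhds_iff.mp (mem_interior_iff_mem_nhds.mp hp)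
  refine ⟨ε/2, by linarith, ?_, ?_⟩ <;>
  · apply hball
    rw [Metric.mem_ball, dist_pi_lt_iff hε]
    intro j
    rcases eq_or_ne j i with rfl|hj
    · simp only [Function.update_self, Real.dist_eq]
      rw [abs_lt]
      constructor <;> linarith
    · simp only [Function.update_of_ne hj, dist_self]
      linarith

lemma interior_sub_O : interior Hset ⊆ Oset := by
  intro p hp
  obtain ⟨δ0, hδ0, hp0p, hp0m⟩ := perturb hp 0
  obtain ⟨δ1, hδ1, hp1p, hp1m⟩ := perturb hp 1
  obtain ⟨δ2, hδ2, hp2p, hp2m⟩ := perturb hp 2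
  simp [Hset, Function.update_apply] at hp0p hp0m hp1p hp1m hp2p hp2m
  obtain ⟨a0, -, -, -, a4⟩ := hp0p
  obtain ⟨b0, -, -, -, -⟩ := hp0m
  obtain ⟨-, c1, -, -, -⟩ := hp1m
  obtain ⟨-, -, d2, d3, -⟩ := hp2p
  obtain ⟨-, -, e2, -, -⟩ := hp2m
  exact ⟨by linarith, by linarith, by linarith, by linarith, by linarith⟩

/-- The anticanonical polytope of Fano class (4) has a unique interior lattice point
and is normal. -/
theorem stmt15 :
    (∃! x : Fin 3 → ℝ, x ∈ interior (convexHull ℝ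
        {![0,0,0], ![5,0,0], ![0,5,0], ![0,0,2], ![1,0,2], ![0,1,2]} :
        Set (Fin 3 → ℝ)) ∧ IsLatticePt x) ∧
    IsNormalPolytope (convexHull ℝ
        {![0,0,0], ![5,0,0], ![0,5,0], ![0,0,2], ![1,0,2], ![0,1,2]} :
        Set (Fin 3 → ℝ)) := by
  have hSv : ({![0,0,0], ![5,0,0], ![0,5,0], ![0,0,2], ![1,0,2], ![0,1,2]} :
      Set (Fin 3 → ℝ)) = Sv := rfl
  rw [hSv, QeqH]
  constructor
  · -- unique interior lattice point
    refine ⟨fun _ => 1, ⟨?_, fun i => ⟨1, by norm_num⟩⟩, ?_⟩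
    · refine interior_maximal O_sub_H O_open ?_
      refine ⟨by norm_num, by norm_num, by norm_num, by norm_num, by norm_num⟩
    · rintro y ⟨hyI, hyL⟩
      have hyO := interior_sub_O hyI
      obtain ⟨b0, h0⟩ := hyL 0
      obtain ⟨b1, h1⟩ := hyL 1
      obtain ⟨b2, h2⟩ := hyL 2
      obtain ⟨o0, o1, o2, o3, o4⟩ := hyO
      rw [h0] at o0 o4
      rw [h1] at o1 o4
      rw [h2] at o2 o3 o4
      have i0 : 0 < b0 := by exact_mod_cast o0
      have i1 : 0 < b1 := by exact_mod_cast o1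
      have i2 : 0 < b2 := by exact_mod_cast o2
      have i3 : b2 < 2 := by exact_mod_cast o3
      have i4 : b0 + b1 + 2 * b2 < 5 := by exact_mod_cast o4
      have hb : b0 = 1 ∧ b1 = 1 ∧ b2 = 1 := by omega
      funext i
      fin_cases i <;>
        simp only [Fin.zero_eta, Fin.mk_one, Fin.reduceFinMk, h0, h1, h2, hb.1, hb.2.1, hb.2.2] <;>
        norm_num
  · -- normality
    intro n hn x hx hlat
    obtain ⟨m, rfl⟩ : ∃ m, n = m + 1 := ⟨n - 1, by omega⟩
    obtain ⟨q, hq, rfl⟩ := hx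
    obtain ⟨hq0, hq1, hq2, hq3, hq4⟩ := hq
    set N : ℝ := ((m + 1 : ℕ) : ℝ) with hN
    have hNpos : (0:ℝ) < N := by positivity
    obtain ⟨a0, h0⟩ := hlat 0
    obtain ⟨a1, h1⟩ := hlat 1
    obtain ⟨a2, h2⟩ := hlat 2
    have e0 : (a0 : ℝ) = N * q 0 := by rw [← h0]; simp [hN]
    have e1 : (a1 : ℝ) = N * q 1 := by rw [← h1]; simp [hN]
    have e2 : (a2 : ℝ) = N * q 2 := by rw [← h2]; simp [hN]
    have r0 : (0:ℝ) ≤ (a0:ℝ) := by rw [e0]; positivity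
    have r1 : (0:ℝ) ≤ (a1:ℝ) := by rw [e1]; positivity
    have r2 : (0:ℝ) ≤ (a2:ℝ) := by rw [e2]; positivity
    have r3 : (a2:ℝ) ≤ 2 * N := by rw [e2]; nlinarith
    have r4 : (a0:ℝ) + (a1:ℝ) + 2*(a2:ℝ) ≤ 5 * N := by rw [e0, e1, e2]; nlinarith
    have hin : inQZ (m+1) a0 a1 a2 := by
      refine ⟨by exact_mod_cast r0, by exact_mod_cast r1, by exact_mod_cast r2, ?_, ?_⟩
      · have : (a2:ℝ) ≤ 2 * ((m+1:ℕ):ℝ) := r3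
        exact_mod_cast this
      · have : (a0:ℝ) + (a1:ℝ) + 2*(a2:ℝ) ≤ 5 * ((m+1:ℕ):ℝ) := r4
        exact_mod_cast this
    obtain ⟨g, hg, ha, hb, hc⟩ := decZ m a0 a1 a2 hin
    refine ⟨fun i j => ((g i j : ℤ) : ℝ), ?_, ?_⟩
    · intro i
      obtain ⟨c0, c1, c2, c3, c4⟩ := hg i
      have d3 : (g i 2 : ℤ) ≤ 2 := by simpa using c3
      have d4 : (g i 0 : ℤ) + g i 1 + 2 * g i 2 ≤ 5 := by simpa using c4
      refine ⟨⟨?_, ?_, ?_, ?_, ?_⟩, fun j => ⟨g i j, rfl⟩⟩ <;> simp only []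
      · exact_mod_cast c0
      · exact_mod_cast c1
      · exact_mod_cast c2
      · exact_mod_cast d3
      · exact_mod_cast d4
    · funext j
      rw [Finset.sum_apply]
      fin_cases j
      · rw [show ((⟨0, by norm_num⟩ : Fin 3)) = (0 : Fin 3) from rfl, h0]
        exact_mod_cast congrArg (Int.cast : ℤ → ℝ) ha
      · rw [show ((⟨1, by norm_num⟩ : Fin 3)) = (1 : Fin 3) from rfl, h1]
        exact_mod_cast congrArg (Int.cast : ℤ → ℝ) hb
      · rw [show ((⟨2, by norm_num⟩ : Fin 3)) = (2 : Fin 3) from rfl, h2]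
        exact_mod_cast congrArg (Int.cast : ℤ → ℝ) hc
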